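/- arXiv:2112.13477 — 2 statements merged into one kernel-verified Lean document; each statement's English description precedes it below -/
import Mathlib

section
/- For a logic program P and interpretation J, J is a stable model of P if and only if ⟨J, J⟩ is an HT-model of P and for all I ⊊ J, ⟨I, J⟩ is not an HT-model of P. -/
inductive Lit (α : Type) where
  | pos : α → Lit α
  | neg : α → Lit α

structure Rule (α : Type) where
  head : Set (Lit α)
  body : Set (Lit α)

def litSat {α : Type} (J : Set α) : Lit α → Prop
  | .pos a => a ∈ J
  | .neg a => a ∉ J

def ruleSat {α : Type} (J : Set α) (π : Rule α) : Prop :=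
  (∃ L ∈ π.body, ¬ litSat J L) ∨ (∃ L ∈ π.head, litSat J L)

def progSat {α : Type} (J : Set α) (P : Set (Rule α)) : Prop :=
  ∀ π ∈ P, ruleSat J π

/-- A rule is kept in the reduct w.r.t. `J` iff `J` does not satisfy the rule `(∼H⁻, ∼B⁻)`. -/
def kept {α : Type} (J : Set α) (π : Rule α) : Prop :=
  (∀ a : α, Lit.neg a ∈ π.body → a ∉ J) ∧ (∀ a : α, Lit.neg a ∈ π.head → a ∈ J)

/-- The positive-part rule `(H⁺, B⁺)`. -/
def reductRule {α : Type} (π : Rule α) : Rule α :=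
  ⟨{L ∈ π.head | ∃ a, L = Lit.pos a}, {L ∈ π.body | ∃ a, L = Lit.pos a}⟩

def reduct {α : Type} (J : Set α) (P : Set (Rule α)) : Set (Rule α) :=
  {ρ | ∃ π ∈ P, kept J π ∧ ρ = reductRule π}

/-- `J` is a stable model of `P`: a subset-minimal classical model of the reduct `P^J`. -/
def stableModel {α : Type} (P : Set (Rule α)) (J : Set α) : Prop :=
  progSat J (reduct J P) ∧ ∀ I : Set α, progSat I (reduct J P) → ¬ I ⊂ J

/-- `⟨I, J⟩` is an RE-model of rule `π` iff `I ⊨ π^J`. -/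
def reRule {α : Type} (π : Rule α) (I J : Set α) : Prop :=
  kept J π → ruleSat I (reductRule π)

/-- `⟨I, J⟩` is an HT-model of rule `π` iff `J ⊨ π` and `I ⊨ π^J`. -/
def htRule {α : Type} (π : Rule α) (I J : Set α) : Prop :=
  ruleSat J π ∧ reRule π I J

def htProg {α : Type} (P : Set (Rule α)) (I J : Set α) : Prop :=
  ∀ π ∈ P, htRule π I J

def reProg {α : Type} (P : Set (Rule α)) (I J : Set α) : Prop :=
  ∀ π ∈ P, reRule π I J

def negLit {α : Type} : Lit α → Lit α
  | .pos a => .neg a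
  | .neg a => .pos a

/-- Rules `π`, `σ` are in conflict iff `head π ≠ ∅` and `head π = ∼ head σ`. -/
def conflict {α : Type} (π σ : Rule α) : Prop :=
  π.head ≠ ∅ ∧ π.head = negLit '' σ.head

def bodySat {α : Type} (J : Set α) (σ : Rule α) : Prop :=
  ∀ L ∈ σ.body, litSat J L

lemma reduct_sat_iff {α : Type} {J : Set α} {π : Rule α} (h : kept J π) :
    ruleSat J (reductRule π) ↔ ruleSat J π := by
  constructor
  · rintro (⟨L, ⟨hL, _⟩, hf⟩ | ⟨L, ⟨hL, _⟩, ht⟩)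
    · exact Or.inl ⟨L, hL, hf⟩
    · exact Or.inr ⟨L, hL, ht⟩
  · rintro (⟨L, hL, hf⟩ | ⟨L, hL, ht⟩)
    · cases L with
      | pos a => exact Or.inl ⟨.pos a, ⟨hL, a, rfl⟩, hf⟩
      | neg a => exact absurd (h.1 a hL) hf
    · cases L with
      | pos a => exact Or.inr ⟨.pos a, ⟨hL, a, rfl⟩, ht⟩
      | neg a => exact absurd (h.2 a hL) ht

lemma not_kept_sat {α : Type} {J : Set α} {π : Rule α} (h : ¬ kept J π) :
    ruleSat J π := by
  rw [kept, not_and_or] at h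
  rcases h with h | h
  · push_neg at h
    obtain ⟨a, ha, haJ⟩ := h
    exact Or.inl ⟨.neg a, ha, by simpa [litSat] using haJ⟩
  · push_neg at h
    obtain ⟨a, ha, haJ⟩ := h
    exact Or.inr ⟨.neg a, ha, haJ⟩

lemma progSat_reduct_iff {α : Type} {P : Set (Rule α)} {I J : Set α} :
    progSat I (reduct J P) ↔ reProg P I J := by
  constructor
  · intro h π hπ hk
    exact h (reductRule π) ⟨π, hπ, hk, rfl⟩
  · rintro h ρ ⟨π, hπ, hk, rfl⟩
    exact h π hπ hk

lemma htProg_JJ_iff {α : Type} {P : Set (Rule α)} {J : Set α} :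
    htProg P J J ↔ progSat J (reduct J P) := by
  rw [progSat_reduct_iff]
  constructor
  · intro h π hπ hk
    exact (h π hπ).2 hk
  · intro h π hπ
    refine ⟨?_, h π hπ⟩
    by_cases hk : kept J π
    · exact (reduct_sat_iff hk).mp (h π hπ hk)
    · exact not_kept_sat hk

/-- `J` is a stable model of `P` iff `⟨J, J⟩` is an HT-model of `P`
and no `⟨I, J⟩` with `I ⊊ J` is an HT-model of `P`. -/
theorem stmt5 {α : Type} (P : Set (Rule α)) (J : Set α) :
    stableModel P J ↔ (htProg P J J ∧ ∀ I : Set α, I ⊂ J → ¬ htProg P I J) := by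
  constructor
  · rintro ⟨h1, h2⟩
    refine ⟨htProg_JJ_iff.mpr h1, fun I hIJ hht => ?_⟩
    exact h2 I (progSat_reduct_iff.mpr (fun π hπ => (hht π hπ).2)) hIJ
  · rintro ⟨h1, h2⟩
    refine ⟨htProg_JJ_iff.mp h1, fun I hI hIJ => ?_⟩
    exact h2 I hIJ (fun π hπ => ⟨(h1 π hπ).1, progSat_reduct_iff.mp hI π hπ⟩)
end

section
/- The JU-semantics and the AS-semantics coincide on dynamic logic programs of length two: for any DLP P = ⟨P₀, P₁⟩, the set of JU-models of P equals the set of AS-models of P. -/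
def allRules {α : Type} {n : ℕ} (P : Fin n → Set (Rule α)) : Set (Rule α) :=
  ⋃ i, P i

/-- JU-rejected rules of a DLP. -/
def rejJU {α : Type} {n : ℕ} (P : Fin n → Set (Rule α)) (J : Set α) : Set (Rule α) :=
  {π | ∃ i j : Fin n, i < j ∧ π ∈ P i ∧ ∃ σ ∈ P j, conflict π σ ∧ bodySat J σ}

/-- AS-rejected rules of component `i` of a DLP (rejected rules cannot reject). -/
def rejAS {α : Type} {n : ℕ} (P : Fin n → Set (Rule α)) (J : Set α) (i : Fin n) :
    Set (Rule α) :=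
  {π | π ∈ P i ∧ ∃ j : Fin n, ∃ _ : i < j,
    ∃ σ, σ ∈ P j ∧ σ ∉ rejAS P J j ∧ conflict π σ ∧ bodySat J σ}
termination_by n - i.val
decreasing_by
  have := j.isLt
  simp only [Fin.lt_def] at *
  omega

def rejASall {α : Type} {n : ℕ} (P : Fin n → Set (Rule α)) (J : Set α) : Set (Rule α) :=
  ⋃ i, rejAS P J i


lemma rejAS_one {α : Type} (P : Fin 2 → Set (Rule α)) (J : Set α) :
    rejAS P J 1 = ∅ := by
  rw [rejAS]
  ext π
  simp only [Set.mem_setOf_eq, Set.mem_empty_iff_false, iff_false, not_and]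
  rintro - ⟨j, hj, -⟩
  exact absurd hj (by omega)

lemma rej_eq {α : Type} (P : Fin 2 → Set (Rule α)) (J : Set α) :
    rejJU P J = rejASall P J := by
  ext π
  constructor
  · rintro ⟨i, j, hij, hπ, σ, hσ, hc, hb⟩
    have hi : i = 0 := by omega
    have hj : j = 1 := by omega
    subst hi hj
    refine Set.mem_iUnion.2 ⟨0, ?_⟩
    rw [rejAS]
    exact ⟨hπ, 1, by omega, σ, hσ, by rw [rejAS_one]; exact Set.notMem_empty σ, hc, hb⟩
  · intro h
    obtain ⟨i, hi⟩ := Set.mem_iUnion.1 h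
    rw [rejAS] at hi
    obtain ⟨hπ, j, hij, σ, hσ, -, hc, hb⟩ := hi
    exact ⟨i, j, hij, hπ, σ, hσ, hc, hb⟩

/-- The JU- and AS-semantics coincide on DLPs of length two: `J` is a JU-model of
`⟨P₀, P₁⟩` iff it is an AS-model. -/
theorem stmt8 {α : Type} (P : Fin 2 → Set (Rule α)) (J : Set α) :
    stableModel (allRules P \ rejJU P J) J ↔
    stableModel (allRules P \ rejASall P J) J := by
  rw [rej_eq]
end
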